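/- Let A be a graded-commutative Z/2-algebra and let w = 1 + w_1 + w_2 + ... and v = 1 + v_1 + v_2 + ... be elements with w_i, v_i in degree i, related by w = Sq(v) where Sq = Σ_i Sq^i is a ring endomorphism of A built from operations Sq^i raising degree by i satisfying Sq^{2i+1} = Sq^1 Sq^{2i}, Sq^1 Sq^1 = 0, and Sq^i(x) = 0 whenever i > deg(x). Suppose additionally that v_j = 0 for all j > 2k. Then w_1 · w_{4k−2} = Sq^1(w_{4k−2}) + w_{4k−1} implies w_1 · w_{4k−2} = 0, provided also that Sq^1(w_{4k−2}) + w_{4k−1} can be expanded via w_d = Σ_{i} Sq^i(v_{d−i}). -/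

import Mathlib

/- STATEMENT 7: algebraic core of the Wu-formula computation: in a (graded-)commutative
Z/2-algebra with operations Sq^i satisfying Sq^{2i+1} = Sq^1 Sq^{2i}, Sq^1 Sq^1 = 0,
with w = Sq(v) expanded degreewise as w_d = Σ_i Sq^i(v_{d−i}), with v_j = 0 for
j > 2k and Sq^i(v_j) = 0 for i > j, the Wu relation
w_1 w_{4k−2} = Sq^1(w_{4k−2}) + w_{4k−1} forces w_1 · w_{4k−2} = 0. -/
theorem stmt7 {A : Type*} [CommRing A] [Algebra (ZMod 2) A]
    (k : ℕ) (hk : 1 ≤ k)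
    (Sq : ℕ → A →ₗ[ZMod 2] A) (w v : ℕ → A)
    (hodd : ∀ (i : ℕ) (x : A), Sq (2 * i + 1) x = Sq 1 (Sq (2 * i) x))
    (hsq1 : ∀ x : A, Sq 1 (Sq 1 x) = 0)
    (hw : ∀ d, w d = ∑ i ∈ Finset.range (d + 1), Sq i (v (d - i)))
    (hv : ∀ j, 2 * k < j → v j = 0)
    (hSqv : ∀ i j, j < i → Sq i (v j) = 0)
    (hwu : w 1 * w (4 * k - 2) = Sq 1 (w (4 * k - 2)) + w (4 * k - 1)) :
    w 1 * w (4 * k - 2) = 0 := by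
  obtain ⟨m, rfl⟩ : ∃ m, k = m + 1 := ⟨k - 1, by omega⟩
  have e2 : 4 * (m + 1) - 2 = 4 * m + 2 := by omega
  have e3 : 4 * (m + 1) - 1 = 4 * m + 3 := by omega
  rw [e2, e3] at hwu
  rw [e2]
  -- compute w (4m+3)
  have hw3 : w (4 * m + 3) = Sq (2 * m + 1) (v (2 * m + 2)) := by
    rw [hw]
    rw [Finset.sum_eq_single_of_mem (2 * m + 1)
      (Finset.mem_range.mpr (by omega))]
    · rw [show 4 * m + 3 - (2 * m + 1) = 2 * m + 2 by omega]
    · intro i hi hne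
      rcases le_or_gt i (2 * m) with h | h
      · have : 2 * (m + 1) < 4 * m + 3 - i := by omega
        rw [hv _ this, map_zero]
      · exact hSqv _ _ (by omega)
  -- compute w (4m+2)
  have hw2 : w (4 * m + 2) = Sq (2 * m) (v (2 * m + 2)) + Sq (2 * m + 1) (v (2 * m + 1)) := by
    rw [hw]
    have hsub : ({2 * m, 2 * m + 1} : Finset ℕ) ⊆ Finset.range (4 * m + 2 + 1) := by
      intro i hi
      simp only [Finset.mem_insert, Finset.mem_singleton] at hi
      exact Finset.mem_range.mpr (by omega)
    have hzero : ∀ i ∈ Finset.range (4 * m + 2 + 1),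
        i ∉ ({2 * m, 2 * m + 1} : Finset ℕ) → Sq i (v (4 * m + 2 - i)) = 0 := by
      intro i hi hni
      simp only [Finset.mem_insert, Finset.mem_singleton, not_or] at hni
      rcases le_or_gt i (2 * m) with h | h
      · have : 2 * (m + 1) < 4 * m + 2 - i := by omega
        rw [hv _ this, map_zero]
      · exact hSqv _ _ (by omega)
    rw [← Finset.sum_subset hsub hzero, Finset.sum_pair (by omega)]
    rw [show 4 * m + 2 - (2 * m) = 2 * m + 2 by omega,
      show 4 * m + 2 - (2 * m + 1) = 2 * m + 1 by omega]
  have key : Sq 1 (w (4 * m + 2)) + w (4 * m + 3) = 0 := by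
    rw [hw2, hw3, map_add]
    have h1 : Sq 1 (Sq (2 * m) (v (2 * m + 2))) = Sq (2 * m + 1) (v (2 * m + 2)) :=
      (hodd m _).symm
    have h2 : Sq 1 (Sq (2 * m + 1) (v (2 * m + 1))) = 0 := by
      rw [hodd m, hsq1]
    rw [h1, h2, add_zero]
    have := two_smul (ZMod 2) (Sq (2 * m + 1) (v (2 * m + 2)))
    rw [show (2 : ZMod 2) = 0 from rfl, zero_smul] at this
    exact this.symm
  rw [hwu, key]
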